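/- For every n ≥ 1, if any row of B_n is partitioned into 2^n consecutive blocks of length t·2^n, then exactly one of these blocks consists entirely of ones and all the remaining blocks consist entirely of zeros. -/

import Mathlib

open Matrix Kronecker

def Jmat (m l : ℕ) : Matrix (Fin m) (Fin l) ℤ := Matrix.of fun _ _ => 1
def Kmat (m : ℕ) : Matrix (Fin m) (Fin m) ℤ :=
  Matrix.of fun i j => if (j : ℕ) = m - 1 - (i : ℕ) then 1 else 0
def kron {m n p q : ℕ} (A : Matrix (Fin m) (Fin n) ℤ) (B : Matrix (Fin p) (Fin q) ℤ) :
    Matrix (Fin (m * p)) (Fin (n * q)) ℤ :=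
  Matrix.reindex finProdFinEquiv finProdFinEquiv (A ⊗ₖ B)
def castM {m n m' n' : ℕ} (hm : m = m') (hn : n = n') (A : Matrix (Fin m) (Fin n) ℤ) :
    Matrix (Fin m') (Fin n') ℤ :=
  Matrix.reindex (finCongr hm) (finCongr hn) A
def alphaM {m l : ℕ} (s : ℕ) (X : Matrix (Fin m) (Fin l) ℤ) :
    Matrix (Fin (m / s)) (Fin l) ℤ :=
  Matrix.of fun i j => X (Fin.castLE (Nat.div_le_self m s) i) j
def vstack {m₁ m₂ l : ℕ} (X : Matrix (Fin m₁) (Fin l) ℤ) (Y : Matrix (Fin m₂) (Fin l) ℤ) :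
    Matrix (Fin (m₁ + m₂)) (Fin l) ℤ :=
  Matrix.reindex finSumFinEquiv (Equiv.refl _) (Matrix.fromRows X Y)
def hstack {m l₁ l₂ : ℕ} (X : Matrix (Fin m) (Fin l₁) ℤ) (Y : Matrix (Fin m) (Fin l₂) ℤ) :
    Matrix (Fin m) (Fin (l₁ + l₂)) ℤ :=
  Matrix.reindex (Equiv.refl _) finSumFinEquiv (Matrix.fromCols X Y)
def block2 {a b c d : ℕ} (A : Matrix (Fin a) (Fin c) ℤ) (B : Matrix (Fin a) (Fin d) ℤ)
    (C : Matrix (Fin b) (Fin c) ℤ) (D : Matrix (Fin b) (Fin d) ℤ) :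
    Matrix (Fin (a + b)) (Fin (c + d)) ℤ :=
  Matrix.reindex finSumFinEquiv finSumFinEquiv (Matrix.fromBlocks A B C D)
lemma four_pow_eq (n : ℕ) : (4 : ℕ) ^ n = 2 ^ n * 2 ^ n := by
  rw [show (4 : ℕ) = 2 * 2 from rfl, mul_pow]
lemma t_four_pow_div (t n : ℕ) : t * 4 ^ n / 2 ^ n = t * 2 ^ n := by
  rw [four_pow_eq, ← mul_assoc, Nat.mul_div_cancel _ (by positivity)]
def vnum (v t n : ℕ) : ℕ := (v + (2 ^ (n + 1) - 4) * t) * 2 ^ (n - 1)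
lemma vnum_one (v t : ℕ) : vnum v t 1 = v := by norm_num [vnum]
lemma vnum_succ (v t n : ℕ) :
    vnum v t (n + 2) = 2 * vnum v t (n + 1) + 2 * (t * 4 ^ (n + 1)) := by
  unfold vnum
  simp only [show n + 2 + 1 = n + 3 from rfl, show n + 2 - 1 = n + 1 from rfl,
    show n + 1 + 1 = n + 2 from rfl, show n + 1 - 1 = n from rfl]
  have h2 : (4 : ℕ) ≤ 2 ^ (n + 2) := by
    calc (4 : ℕ) = 2 ^ 2 := rfl
    _ ≤ 2 ^ (n + 2) := Nat.pow_le_pow_right (by norm_num) (by omega)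
  have h3 : (4 : ℕ) ≤ 2 ^ (n + 3) := le_trans h2 (Nat.pow_le_pow_right (by norm_num) (by omega))
  rw [four_pow_eq]
  zify [h2, h3]
  ring
def Pmat (t n : ℕ) : Matrix (Fin (t * 4 ^ n)) (Fin (t * 4 ^ n)) ℤ :=
  castM (by rw [four_pow_eq]; ring) (by rw [four_pow_eq]; ring)
    (kron (kron (Jmat (2 ^ n) 1) (Kmat (2 ^ n))) (Jmat t (t * 2 ^ n)))
def Pone (t : ℕ) : Matrix (Fin (4 * t)) (Fin (4 * t)) ℤ :=
  castM (by ring) (by ring) (kron (kron (Jmat 2 1) (Kmat 2)) (Jmat t (2 * t)))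

/-- The recursively defined sequence `P'_n` of Lemma 2. -/
def P'mat (t : ℕ) : (n : ℕ) → Matrix (Fin (t * 4 ^ n)) (Fin (t * 4 ^ n)) ℤ
  | 0 => 0
  | 1 => castM (by ring) (by ring) (kron (kron (Jmat 2 1) (Kmat 2)) (Jmat t (2 * t)))
  | (n + 2) =>
      castM
        (by rw [t_four_pow_div, four_pow_eq]; ring)
        (by ring)
        (kron (kron (kron (Jmat (2 ^ (n + 2)) 1) (Kmat 2))
          (alphaM (2 ^ (n + 1)) (P'mat t (n + 1)))) (Jmat 1 2))

/-- The recursively defined sequence `B_n` (with `B_1` given). -/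
def Bmat (t v : ℕ) (B₁ : Matrix (Fin v) (Fin (4 * t)) ℤ) :
    (n : ℕ) → Matrix (Fin (vnum v t n)) (Fin (t * 4 ^ n)) ℤ
  | 0 => 0
  | 1 => castM (vnum_one v t).symm (by ring) B₁
  | (n + 2) =>
      castM (by rw [vnum_succ]; try ring) (by ring)
        (vstack (kron (kron (Kmat 2) (Bmat t v B₁ (n + 1))) (Jmat 1 2))
          (kron (kron (1 : Matrix (Fin 2) (Fin 2) ℤ) (Pmat t (n + 1))) (Jmat 1 2)))

/-- The recursively defined sequence `C_n` (with `C_1` given). -/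
def Cmat (t v : ℕ) (C₁ : Matrix (Fin (4 * t)) (Fin v) ℤ) :
    (n : ℕ) → Matrix (Fin (t * 4 ^ n)) (Fin (vnum v t n)) ℤ
  | 0 => 0
  | 1 => castM (by ring) (vnum_one v t).symm C₁
  | (n + 2) =>
      castM (by rw [t_four_pow_div, four_pow_eq]; ring) (by rw [vnum_succ]; try ring)
        (hstack
          (kron (kron (Jmat (2 ^ (n + 2)) 1) (1 : Matrix (Fin 2) (Fin 2) ℤ))
            (alphaM (2 ^ (n + 1)) (Cmat t v C₁ (n + 1))))
          (kron (kron (Jmat (2 ^ (n + 2)) 1) (1 : Matrix (Fin 2) (Fin 2) ℤ))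
            (alphaM (2 ^ (n + 1)) (Pmat t (n + 1)))))

/-- The recursively defined sequence `A_n` (with `A_1`, `B_1`, `C_1` given). -/
def Amat (t v : ℕ) (A₁ : Matrix (Fin v) (Fin v) ℤ) (B₁ : Matrix (Fin v) (Fin (4 * t)) ℤ)
    (C₁ : Matrix (Fin (4 * t)) (Fin v) ℤ) :
    (n : ℕ) → Matrix (Fin (vnum v t n)) (Fin (vnum v t n)) ℤ
  | 0 => 0
  | 1 => castM (vnum_one v t).symm (vnum_one v t).symm A₁
  | (n + 2) =>
      castM (by rw [vnum_succ]) (by rw [vnum_succ])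
        (block2 (kron (1 : Matrix (Fin 2) (Fin 2) ℤ) (Amat t v A₁ B₁ C₁ (n + 1)))
          (kron (1 : Matrix (Fin 2) (Fin 2) ℤ) (Bmat t v B₁ (n + 1)))
          (kron (Kmat 2) (Cmat t v C₁ (n + 1)))
          (kron (Kmat 2) (Pmat t (n + 1))))


lemma kron_apply {m n p q : ℕ} (A : Matrix (Fin m) (Fin n) ℤ) (B : Matrix (Fin p) (Fin q) ℤ)
    (i : Fin (m * p)) (j : Fin (n * q)) :
    kron A B i j = A i.divNat j.divNat * B i.modNat j.modNat := by
  simp [kron, Matrix.reindex_apply, Matrix.submatrix_apply, finProdFinEquiv_symm_apply,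
    Matrix.kroneckerMap_apply]

lemma castM_apply {m n m' n' : ℕ} (hm : m = m') (hn : n = n') (A : Matrix (Fin m) (Fin n) ℤ)
    (i : Fin m') (j : Fin n') :
    castM hm hn A i j = A (Fin.cast hm.symm i) (Fin.cast hn.symm j) := rfl

lemma vstack_apply_left {m₁ m₂ l : ℕ} (X : Matrix (Fin m₁) (Fin l) ℤ)
    (Y : Matrix (Fin m₂) (Fin l) ℤ) (i : Fin (m₁ + m₂)) (j : Fin l) (h : (i : ℕ) < m₁) :
    vstack X Y i j = X ⟨i, h⟩ j := by
  have e : finSumFinEquiv.symm i = Sum.inl ⟨(i : ℕ), h⟩ := by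
    rw [Equiv.symm_apply_eq]; ext; simp
  simp [vstack, e]

lemma vstack_apply_right {m₁ m₂ l : ℕ} (X : Matrix (Fin m₁) (Fin l) ℤ)
    (Y : Matrix (Fin m₂) (Fin l) ℤ) (i : Fin (m₁ + m₂)) (j : Fin l) (h : m₁ ≤ (i : ℕ))
    (h2 : (i : ℕ) - m₁ < m₂) :
    vstack X Y i j = Y ⟨(i : ℕ) - m₁, h2⟩ j := by
  have e : finSumFinEquiv.symm i = Sum.inr ⟨(i : ℕ) - m₁, h2⟩ := by
    rw [Equiv.symm_apply_eq]; ext; simp; omega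
  simp [vstack, e]

lemma blockUnique {N L M : ℕ} (hL : 0 < L) (hLM : L * M = N) (f : Fin N → ℤ) (b : Fin M)
    (hb : ∀ j : Fin N, f j = if (j : ℕ) / L = (b : ℕ) then 1 else 0) :
    ∃! b' : Fin M, ∀ j : Fin N, f j = if (j : ℕ) / L = (b' : ℕ) then 1 else 0 := by
  refine ⟨b, hb, ?_⟩
  intro b' h'
  have hjlt : L * (b : ℕ) < N := hLM ▸ (Nat.mul_lt_mul_left hL).mpr b.isLt
  set j : Fin N := ⟨L * (b : ℕ), hjlt⟩ with hj
  have hd : ((j : ℕ)) / L = (b : ℕ) := Nat.mul_div_cancel_left _ hL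
  have e1 := hb j
  have e2 := h' j
  rw [e1, hd] at e2
  simp only [if_pos rfl] at e2
  by_contra hne
  have : (b : ℕ) ≠ (b' : ℕ) := fun hh => hne (Fin.ext hh.symm)
  rw [if_neg this] at e2
  exact absurd e2 (by norm_num)

lemma rep_unique {T c β c' β' : ℕ} (hβ : β < T) (hβ' : β' < T)
    (h : c * T + β = c' * T + β') : c = c' ∧ β = β' := by
  rcases Nat.lt_trichotomy c c' with hlt | he | hgt
  · exfalso
    have hlt' : c + 1 ≤ c' := hlt
    have := Nat.mul_le_mul_right T hlt'
    have h2 : (c + 1) * T = c * T + T := by ring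
    omega
  · exact ⟨he, by subst he; exact Nat.add_left_cancel h⟩
  · exfalso
    have hgt' : c' + 1 ≤ c := hgt
    have := Nat.mul_le_mul_right T hgt'
    have h2 : (c' + 1) * T = c' * T + T := by ring
    omega

lemma div_block {m : ℕ} (M j : ℕ) (hm : 0 < m) :
    j / (2 * m) = ((j / 2) / (m * M)) * M + ((j / 2) % (m * M)) / m := by
  set c := (j / 2) / (m * M) with hc
  set β := ((j / 2) % (m * M)) / m with hβ
  set ρ := ((j / 2) % (m * M)) % m with hρ
  have h1 : j = 2 * (j / 2) + j % 2 := (Nat.div_add_mod j 2).symm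
  have h2 : j / 2 = (m * M) * c + (j / 2) % (m * M) := (Nat.div_add_mod _ _).symm
  have h3 : (j / 2) % (m * M) = m * β + ρ := (Nat.div_add_mod _ _).symm
  have hρlt : ρ < m := Nat.mod_lt _ hm
  have hs : j % 2 < 2 := Nat.mod_lt _ (by norm_num)
  have key : j = (2 * ρ + j % 2) + (2 * m) * (c * M + β) := by
    calc j = 2 * (j / 2) + j % 2 := h1
      _ = 2 * ((m * M) * c + (m * β + ρ)) + j % 2 := by rw [← h3, ← h2]
      _ = (2 * ρ + j % 2) + (2 * m) * (c * M + β) := by ring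
  rw [key, Nat.add_mul_div_left _ _ (by positivity), Nat.div_eq_of_lt (by omega), Nat.zero_add]

lemma Pmat_apply (t n : ℕ) (ht : 0 < t) (i j : Fin (t * 4 ^ n)) :
    Pmat t n i j =
      if (j : ℕ) / (t * 2 ^ n) = 2 ^ n - 1 - ((i : ℕ) / t) % 2 ^ n then 1 else 0 := by
  have hpos : 0 < t * 2 ^ n := by positivity
  have hjb : (j : ℕ) / (t * 2 ^ n) < 2 ^ n := by
    apply Nat.div_lt_of_lt_mul
    have : t * 2 ^ n * 2 ^ n = t * 4 ^ n := by rw [four_pow_eq]; ring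
    rw [this]; exact j.isLt
  rw [Pmat, castM_apply, kron_apply, kron_apply]
  simp only [Jmat, Kmat, Matrix.of_apply, Fin.coe_divNat, Fin.coe_modNat, Fin.coe_cast,
    one_mul, mul_one]
  simp only [Nat.mod_eq_of_lt hjb]


lemma vnum_pos (v t n : ℕ) (hv : 0 < v) : 0 < vnum v t n := by
  unfold vnum
  have h1 : 0 < v + (2 ^ (n + 1) - 4) * t := by omega
  positivity

lemma Bmat_succ_apply_top (t v : ℕ) (B₁ : Matrix (Fin v) (Fin (4 * t)) ℤ) (p : ℕ)
    (hvN : 0 < vnum v t (p + 1)) (hC : 0 < t * 4 ^ (p + 1))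
    (i : Fin (vnum v t (p + 2))) (j : Fin (t * 4 ^ (p + 2)))
    (hi : (i : ℕ) < 2 * vnum v t (p + 1)) :
    Bmat t v B₁ (p + 2) i j =
      (if ((j : ℕ) / 2) / (t * 4 ^ (p + 1)) = 1 - (i : ℕ) / vnum v t (p + 1) then 1 else 0) *
      Bmat t v B₁ (p + 1) ⟨(i : ℕ) % vnum v t (p + 1), Nat.mod_lt _ hvN⟩
        ⟨((j : ℕ) / 2) % (t * 4 ^ (p + 1)), Nat.mod_lt _ hC⟩ := by
  simp only [Bmat]
  rw [castM_apply, vstack_apply_left _ _ _ _ (by simpa using hi), kron_apply, kron_apply]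
  simp only [Jmat, Matrix.of_apply, mul_one]
  congr 1
  · simp [Kmat, Fin.coe_divNat, Fin.coe_modNat, Fin.coe_cast, Nat.div_one]
  · congr 1 <;> ext <;>
      simp [Fin.coe_divNat, Fin.coe_modNat, Fin.coe_cast, Nat.div_one]

lemma Bmat_succ_apply_bot (t v : ℕ) (ht : 0 < t) (B₁ : Matrix (Fin v) (Fin (4 * t)) ℤ) (p : ℕ)
    (hC : 0 < t * 4 ^ (p + 1))
    (i : Fin (vnum v t (p + 2))) (j : Fin (t * 4 ^ (p + 2)))
    (hi : 2 * vnum v t (p + 1) ≤ (i : ℕ)) :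
    Bmat t v B₁ (p + 2) i j =
      (if ((i : ℕ) - 2 * vnum v t (p + 1)) / (t * 4 ^ (p + 1)) =
          ((j : ℕ) / 2) / (t * 4 ^ (p + 1)) then 1 else 0) *
      (if ((j : ℕ) / 2) % (t * 4 ^ (p + 1)) / (t * 2 ^ (p + 1)) =
          2 ^ (p + 1) - 1 -
            (((i : ℕ) - 2 * vnum v t (p + 1)) % (t * 4 ^ (p + 1)) / t) % 2 ^ (p + 1)
        then 1 else 0) := by
  have hlt : (i : ℕ) - 2 * vnum v t (p + 1) * 1 < 2 * (t * 4 ^ (p + 1)) * 1 := by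
    have h1 : (i : ℕ) < vnum v t (p + 2) := i.isLt
    have h2 := vnum_succ v t p
    omega
  simp only [Bmat]
  rw [castM_apply, vstack_apply_right _ _ _ _ (by simpa using hi) (by simpa using hlt),
    kron_apply, kron_apply]
  simp only [Jmat, Matrix.of_apply, mul_one]
  congr 1
  · simp [Matrix.one_apply, Fin.ext_iff, Fin.coe_divNat, Fin.coe_modNat, Fin.coe_cast,
      Nat.div_one]
  · rw [Pmat_apply _ _ ht]
    simp [Fin.coe_divNat, Fin.coe_modNat, Fin.coe_cast, Nat.div_one]

/-- Lemma 4(1) for `B_n`: in every row, partitioned into `2^n` consecutive blocks of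
length `t·2^n`, exactly one block consists entirely of ones and all others of zeros. -/
theorem Bmat_row_blockiness
    (t v k : ℕ) (ht : 0 < t) (hv : 0 < v) (hk : 0 < k)
    (B₁ : Matrix (Fin v) (Fin (4 * t)) ℤ)
    (hB01 : ∀ i j, B₁ i j = 0 ∨ B₁ i j = 1)
    (hblockB : ∀ i : Fin v, ∃! b : Fin 2, ∀ j : Fin (4 * t),
      B₁ i j = if (j : ℕ) / (2 * t) = (b : ℕ) then 1 else 0)
    (n : ℕ) (hn : 1 ≤ n) (i : Fin (vnum v t n)) :
    ∃! b : Fin (2 ^ n), ∀ j : Fin (t * 4 ^ n),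
      Bmat t v B₁ n i j = if (j : ℕ) / (t * 2 ^ n) = (b : ℕ) then 1 else 0 := by
  obtain ⟨p, rfl⟩ : ∃ p, n = p + 1 := ⟨n - 1, by omega⟩
  clear hn
  revert i
  induction p with
  | zero =>
    intro i
    obtain ⟨b, hb, -⟩ := hblockB (Fin.cast (vnum_one v t).symm.symm i)
    refine blockUnique (L := t * 2 ^ 1) (M := 2 ^ 1) (by positivity)
      (by rw [four_pow_eq]; ring) _ ⟨(b : ℕ), by simpa using b.isLt⟩ ?_
    intro j
    simp only [Bmat, castM_apply]
    rw [hb]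
    have hc : t * 2 ^ 1 = 2 * t := by ring
    simp only [Fin.coe_cast, hc]
  | succ p IH =>
    intro i
    have hvN : 0 < vnum v t (p + 1) := vnum_pos v t (p + 1) hv
    have hC : 0 < t * 4 ^ (p + 1) := by positivity
    have hm : 0 < t * 2 ^ (p + 1) := by positivity
    have hCm : t * 4 ^ (p + 1) = t * 2 ^ (p + 1) * 2 ^ (p + 1) := by rw [four_pow_eq]; ring
    have hL2 : t * 2 ^ (p + 2) = 2 * (t * 2 ^ (p + 1)) := by ring
    have h2M : (2 : ℕ) ^ (p + 2) = 2 * 2 ^ (p + 1) := by ring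
    -- decomposition of the block index of a column
    have hdb : ∀ j : Fin (t * 4 ^ (p + 2)), (j : ℕ) / (t * 2 ^ (p + 2)) =
        ((j : ℕ) / 2) / (t * 4 ^ (p + 1)) * 2 ^ (p + 1) +
          ((j : ℕ) / 2) % (t * 4 ^ (p + 1)) / (t * 2 ^ (p + 1)) := by
      intro j
      rw [hL2, hCm]
      exact div_block (2 ^ (p + 1)) _ hm
    have hβlt : ∀ j : Fin (t * 4 ^ (p + 2)),
        ((j : ℕ) / 2) % (t * 4 ^ (p + 1)) / (t * 2 ^ (p + 1)) < 2 ^ (p + 1) := by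
      intro j
      apply Nat.div_lt_of_lt_mul
      rw [← hCm]
      exact Nat.mod_lt _ hC
    by_cases hi : (i : ℕ) < 2 * vnum v t (p + 1)
    · obtain ⟨b, hb, -⟩ := IH ⟨(i : ℕ) % vnum v t (p + 1), Nat.mod_lt _ hvN⟩
      have hbM : (b : ℕ) < 2 ^ (p + 1) := b.isLt
      have hu : (1 - (i : ℕ) / vnum v t (p + 1)) * 2 ^ (p + 1) + (b : ℕ) < 2 ^ (p + 2) := by
        have h1 : (1 - (i : ℕ) / vnum v t (p + 1)) * 2 ^ (p + 1) ≤ 1 * 2 ^ (p + 1) :=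
          Nat.mul_le_mul_right _ (Nat.sub_le 1 _)
        calc (1 - (i : ℕ) / vnum v t (p + 1)) * 2 ^ (p + 1) + (b : ℕ)
            < (1 - (i : ℕ) / vnum v t (p + 1)) * 2 ^ (p + 1) + 2 ^ (p + 1) :=
              Nat.add_lt_add_left hbM _
          _ ≤ 1 * 2 ^ (p + 1) + 2 ^ (p + 1) := Nat.add_le_add_right h1 _
          _ = 2 ^ (p + 2) := by ring
      refine blockUnique (L := t * 2 ^ (p + 2)) (M := 2 ^ (p + 2)) (by positivity)
        (by rw [four_pow_eq]; ring) _
        ⟨(1 - (i : ℕ) / vnum v t (p + 1)) * 2 ^ (p + 1) + (b : ℕ), hu⟩ ?_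
      intro j
      rw [Bmat_succ_apply_top t v B₁ p hvN hC i j hi, hb, hdb j]
      have hcond : (((j : ℕ) / 2) / (t * 4 ^ (p + 1)) * 2 ^ (p + 1) +
            ((j : ℕ) / 2) % (t * 4 ^ (p + 1)) / (t * 2 ^ (p + 1)) =
            (1 - (i : ℕ) / vnum v t (p + 1)) * 2 ^ (p + 1) + (b : ℕ)) ↔
          (((j : ℕ) / 2) / (t * 4 ^ (p + 1)) = 1 - (i : ℕ) / vnum v t (p + 1) ∧
            ((j : ℕ) / 2) % (t * 4 ^ (p + 1)) / (t * 2 ^ (p + 1)) = (b : ℕ)) := by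
        constructor
        · intro hh; exact rep_unique (hβlt j) hbM hh
        · rintro ⟨h1, h2⟩; rw [h1, h2]
      by_cases h1 : ((j : ℕ) / 2) / (t * 4 ^ (p + 1)) = 1 - (i : ℕ) / vnum v t (p + 1) <;>
        by_cases h2 : ((j : ℕ) / 2) % (t * 4 ^ (p + 1)) / (t * 2 ^ (p + 1)) = (b : ℕ) <;>
        simp [h1, h2, hcond]
    · push_neg at hi
      have hx2 : (i : ℕ) - 2 * vnum v t (p + 1) < 2 * (t * 4 ^ (p + 1)) := by
        have h1 : (i : ℕ) < vnum v t (p + 2) := i.isLt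
        have h2 := vnum_succ v t p
        omega
      have ha2 : ((i : ℕ) - 2 * vnum v t (p + 1)) / (t * 4 ^ (p + 1)) < 2 :=
        Nat.div_lt_of_lt_mul (by omega)
      have hP1 : (2 : ℕ) ^ (p + 1) - 1 -
          (((i : ℕ) - 2 * vnum v t (p + 1)) % (t * 4 ^ (p + 1)) / t) % 2 ^ (p + 1)
            < 2 ^ (p + 1) := by
        have : 0 < (2 : ℕ) ^ (p + 1) := by positivity
        omega
      have hu : ((i : ℕ) - 2 * vnum v t (p + 1)) / (t * 4 ^ (p + 1)) * 2 ^ (p + 1) +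
          (2 ^ (p + 1) - 1 -
            (((i : ℕ) - 2 * vnum v t (p + 1)) % (t * 4 ^ (p + 1)) / t) % 2 ^ (p + 1))
            < 2 ^ (p + 2) := by
        have h1 : ((i : ℕ) - 2 * vnum v t (p + 1)) / (t * 4 ^ (p + 1)) * 2 ^ (p + 1)
            ≤ 1 * 2 ^ (p + 1) := Nat.mul_le_mul_right _ (by omega)
        calc ((i : ℕ) - 2 * vnum v t (p + 1)) / (t * 4 ^ (p + 1)) * 2 ^ (p + 1) +
              (2 ^ (p + 1) - 1 -
                (((i : ℕ) - 2 * vnum v t (p + 1)) % (t * 4 ^ (p + 1)) / t) % 2 ^ (p + 1))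
            < ((i : ℕ) - 2 * vnum v t (p + 1)) / (t * 4 ^ (p + 1)) * 2 ^ (p + 1) + 2 ^ (p + 1) :=
              Nat.add_lt_add_left hP1 _
          _ ≤ 1 * 2 ^ (p + 1) + 2 ^ (p + 1) := Nat.add_le_add_right h1 _
          _ = 2 ^ (p + 2) := by ring
      refine blockUnique (L := t * 2 ^ (p + 2)) (M := 2 ^ (p + 2)) (by positivity)
        (by rw [four_pow_eq]; ring) _
        ⟨((i : ℕ) - 2 * vnum v t (p + 1)) / (t * 4 ^ (p + 1)) * 2 ^ (p + 1) +
          (2 ^ (p + 1) - 1 -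
            (((i : ℕ) - 2 * vnum v t (p + 1)) % (t * 4 ^ (p + 1)) / t) % 2 ^ (p + 1)), hu⟩ ?_
      intro j
      rw [Bmat_succ_apply_bot t v ht B₁ p hC i j hi, hdb j]
      have hcond : (((j : ℕ) / 2) / (t * 4 ^ (p + 1)) * 2 ^ (p + 1) +
            ((j : ℕ) / 2) % (t * 4 ^ (p + 1)) / (t * 2 ^ (p + 1)) =
            ((i : ℕ) - 2 * vnum v t (p + 1)) / (t * 4 ^ (p + 1)) * 2 ^ (p + 1) +
            (2 ^ (p + 1) - 1 -
              (((i : ℕ) - 2 * vnum v t (p + 1)) % (t * 4 ^ (p + 1)) / t) % 2 ^ (p + 1))) ↔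
          (((i : ℕ) - 2 * vnum v t (p + 1)) / (t * 4 ^ (p + 1)) =
              ((j : ℕ) / 2) / (t * 4 ^ (p + 1)) ∧
            ((j : ℕ) / 2) % (t * 4 ^ (p + 1)) / (t * 2 ^ (p + 1)) =
              2 ^ (p + 1) - 1 -
                (((i : ℕ) - 2 * vnum v t (p + 1)) % (t * 4 ^ (p + 1)) / t) % 2 ^ (p + 1)) := by
        constructor
        · intro hh
          obtain ⟨e1, e2⟩ := rep_unique (hβlt j) hP1 hh
          exact ⟨e1.symm, e2⟩
        · rintro ⟨h1, h2⟩; rw [← h1, h2]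
      by_cases h1 : ((i : ℕ) - 2 * vnum v t (p + 1)) / (t * 4 ^ (p + 1)) =
          ((j : ℕ) / 2) / (t * 4 ^ (p + 1))
      · by_cases h2 : ((j : ℕ) / 2) % (t * 4 ^ (p + 1)) / (t * 2 ^ (p + 1)) =
            2 ^ (p + 1) - 1 -
              (((i : ℕ) - 2 * vnum v t (p + 1)) % (t * 4 ^ (p + 1)) / t) % 2 ^ (p + 1)
        · simp [h1, h2, hcond]
        · simp [h1, h2, hcond]
      · have h1' : ¬ ((j : ℕ) / 2 / (t * 4 ^ (p + 1)) =
            ((i : ℕ) - 2 * vnum v t (p + 1)) / (t * 4 ^ (p + 1))) := fun hh => h1 hh.symm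
        by_cases h2 : ((j : ℕ) / 2) % (t * 4 ^ (p + 1)) / (t * 2 ^ (p + 1)) =
            2 ^ (p + 1) - 1 -
              (((i : ℕ) - 2 * vnum v t (p + 1)) % (t * 4 ^ (p + 1)) / t) % 2 ^ (p + 1)
        · simp [h1, h1', h2, hcond]
        · simp [h1, h1', h2, hcond]
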